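/- Let X ⊆ [0,1]^d be measurable and let P^s_i(y) be a pyramid. Then for any u ∈ R^d, |vol(X ∩ P^s_i(y)) - vol(X ∩ P^s_i(y+u))| ≤ √(8d³)·‖u‖_∞. -/

import Mathlib

open MeasureTheory
open scoped ENNReal

section Aux

lemma vol_pi_band' {d : ℕ} (i : Fin d) (I : Set ℝ) :
    volume (Set.pi Set.univ fun k => if k = i then I else Set.Icc (0:ℝ) 1) = volume I := by
  rw [volume_pi_pi]
  have : ∀ k : Fin d, volume (if k = i then I else Set.Icc (0:ℝ) 1)
      = if k = i then volume I else 1 := by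
    intro k; split <;> simp
  simp only [this]
  simp [Finset.prod_ite_eq']

lemma slab_ne' {d : ℕ} (i j : Fin d) (hij : j ≠ i) (s ε : ℝ) (hs : s = 1 ∨ s = -1)
    (a b : ℝ) :
    volume {z : Fin d → ℝ | z ∈ Set.Icc 0 1 ∧ s * z i + ε * z j ∈ Set.Ico a b}
      ≤ ENNReal.ofReal (b - a) := by
  classical
  set r : Fin d → ℝ := s • (Pi.single i 1 : Fin d → ℝ) + ε • (Pi.single j 1 : Fin d → ℝ) with hr
  set M : Matrix (Fin d) (Fin d) ℝ := Matrix.updateRow 1 i r with hM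
  have hdet : M.det = s := by
    rw [hM, hr, Matrix.det_updateRow_add, Matrix.det_updateRow_smul, Matrix.det_updateRow_smul]
    have h1 : Matrix.updateRow (1 : Matrix (Fin d) (Fin d) ℝ) i (Pi.single i 1) = 1 := by
      rw [show (Pi.single i 1 : Fin d → ℝ) = (1 : Matrix (Fin d) (Fin d) ℝ) i by
        ext k; simp [Matrix.one_apply, Pi.single_apply, eq_comm]]
      exact Matrix.updateRow_eq_self _ _
    have h2 : (Matrix.updateRow (1 : Matrix (Fin d) (Fin d) ℝ) i (Pi.single j 1)).det = 0 := by
      apply Matrix.det_zero_of_row_eq (show i ≠ j from hij.symm)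
      ext k
      simp [Matrix.updateRow_apply, hij.symm, Matrix.one_apply, Pi.single_apply, eq_comm]
    rw [h1, h2, Matrix.det_one, mul_one, mul_zero, add_zero]
  have hT : ∀ z : Fin d → ℝ, Matrix.toLin' M z
      = Function.update z i (s * z i + ε * z j) := by
    intro z
    ext k
    rw [Matrix.toLin'_apply]
    rcases eq_or_ne k i with rfl | hk
    · simp only [Matrix.mulVec, hM, hr, dotProduct, Matrix.updateRow_self,
        Pi.add_apply, Pi.smul_apply, Pi.single_apply, smul_eq_mul, Function.update_self,
        mul_ite, mul_one, mul_zero, add_mul, ite_mul, zero_mul]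
      rw [Finset.sum_add_distrib]
      simp [Finset.sum_ite_eq']
    · simp [Matrix.mulVec, hM, hr, Matrix.updateRow_ne hk, Matrix.one_apply,
        dotProduct, Pi.single_apply, Function.update_of_ne hk, ite_mul,
        Finset.sum_ite_eq']
  have hs0 : s ≠ 0 := by rcases hs with rfl | rfl <;> norm_num
  have hdet' : LinearMap.det (Matrix.toLin' M) ≠ 0 := by
    rw [LinearMap.det_toLin', hdet]; exact hs0
  have hsub : {z : Fin d → ℝ | z ∈ Set.Icc 0 1 ∧ s * z i + ε * z j ∈ Set.Ico a b}
      ⊆ Matrix.toLin' M ⁻¹' (Set.pi Set.univ fun k => if k = i then Set.Ico a b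
          else Set.Icc (0:ℝ) 1) := by
    intro z hz
    simp only [Set.mem_preimage, Set.mem_pi, Set.mem_univ, forall_true_left, hT]
    intro k
    rcases eq_or_ne k i with rfl | hk
    · simpa using hz.2
    · rw [Function.update_of_ne hk, if_neg hk]
      rcases hz.1 with ⟨h0, h1⟩
      exact ⟨h0 k, h1 k⟩
  calc volume {z : Fin d → ℝ | z ∈ Set.Icc 0 1 ∧ s * z i + ε * z j ∈ Set.Ico a b}
      ≤ volume (Matrix.toLin' M ⁻¹' (Set.pi Set.univ fun k => if k = i then Set.Ico a b
          else Set.Icc (0:ℝ) 1)) := measure_mono hsub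
    _ = ENNReal.ofReal |(LinearMap.det (Matrix.toLin' M))⁻¹| * volume
          (Set.pi Set.univ fun k => if k = i then Set.Ico a b else Set.Icc (0:ℝ) 1) :=
        Measure.addHaar_preimage_linearMap volume hdet' _
    _ = ENNReal.ofReal (b - a) := by
        rw [vol_pi_band', LinearMap.det_toLin', hdet, Real.volume_Ico]
        rcases hs with rfl | rfl <;> norm_num

lemma slab_eq' {d : ℕ} (i : Fin d) (c : ℝ) (hc : c = 2 ∨ c = -2) (a b : ℝ) :
    volume {z : Fin d → ℝ | z ∈ Set.Icc 0 1 ∧ c * z i ∈ Set.Ico a b}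
      ≤ ENNReal.ofReal ((b - a) / 2) := by
  have hsub : {z : Fin d → ℝ | z ∈ Set.Icc 0 1 ∧ c * z i ∈ Set.Ico a b}
      ⊆ Set.pi Set.univ fun k => if k = i then ((fun t => c * t) ⁻¹' Set.Ico a b)
          else Set.Icc (0:ℝ) 1 := by
    intro z hz k _
    rcases eq_or_ne k i with rfl | hk
    · simp only [if_pos rfl]; exact hz.2
    · simp only [if_neg hk]; exact ⟨hz.1.1 k, hz.1.2 k⟩
  refine le_trans (measure_mono hsub) ?_
  rw [vol_pi_band']
  have : volume ((fun t => c * t) ⁻¹' Set.Ico a b) = ENNReal.ofReal ((b - a) / 2) := by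
    rcases hc with rfl | rfl
    · have : ((fun t : ℝ => 2 * t) ⁻¹' Set.Ico a b) = Set.Ico (a/2) (b/2) := by
        ext t; simp only [Set.mem_preimage, Set.mem_Ico]; constructor <;> intro h <;>
          constructor <;> linarith [h.1, h.2]
      rw [this, Real.volume_Ico]; ring_nf
    · have : ((fun t : ℝ => -2 * t) ⁻¹' Set.Ico a b) = Set.Ioc (-(b/2)) (-(a/2)) := by
        ext t; simp only [Set.mem_preimage, Set.mem_Ico, Set.mem_Ioc]; constructor <;>
          intro h <;> constructor <;> linarith [h.1, h.2]
      rw [this, Real.volume_Ioc]; ring_nf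
  exact this.le

lemma mem_Pyr_iff' {d : ℕ} (s : ℝ) (hs : s = 1 ∨ s = -1) (i : Fin d) (y z : Fin d → ℝ) :
    (s * (z i - y i) = ‖z - y‖) ↔ ∀ j, |z j - y j| ≤ s * (z i - y i) := by
  have habs : |s| = 1 := by rcases hs with rfl | rfl <;> norm_num
  constructor
  · intro h j
    rw [h]
    calc |z j - y j| = ‖(z - y) j‖ := by simp [Real.norm_eq_abs]
      _ ≤ ‖z - y‖ := norm_le_pi_norm _ j
  · intro h
    have h0 : 0 ≤ s * (z i - y i) := le_trans (abs_nonneg _) (h i)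
    have h1 : ‖z - y‖ ≤ s * (z i - y i) := by
      rw [pi_norm_le_iff_of_nonneg h0]
      intro j
      simpa [Real.norm_eq_abs] using h j
    have h2 : s * (z i - y i) ≤ ‖z - y‖ := by
      calc s * (z i - y i) ≤ |s * (z i - y i)| := le_abs_self _
        _ = |z i - y i| := by rw [abs_mul, habs, one_mul]
        _ = ‖(z - y) i‖ := by simp [Real.norm_eq_abs]
        _ ≤ ‖z - y‖ := norm_le_pi_norm _ i
    linarith

/-- The slab used to cover the symmetric difference of two pyramids. -/
def Slb {d : ℕ} (s : ℝ) (i : Fin d) (y u : Fin d → ℝ) (j : Fin d) (ε : ℝ) :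
    Set (Fin d → ℝ) :=
  {z | z ∈ Set.Icc 0 1 ∧ s * z i + ε * z j ∈
    Set.Ico (min (s * y i + ε * y j) (s * (y i + u i) + ε * (y j + u j)))
            (max (s * y i + ε * y j) (s * (y i + u i) + ε * (y j + u j)))}

lemma Slb_bound_ne {d : ℕ} (s : ℝ) (hs : s = 1 ∨ s = -1) (i : Fin d) (y u : Fin d → ℝ)
    (j : Fin d) (hij : j ≠ i) (ε : ℝ) (hε : ε = 1 ∨ ε = -1) :
    volume (Slb s i y u j ε) ≤ ENNReal.ofReal (2 * ‖u‖) := by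
  refine le_trans (slab_ne' i j hij s ε hs _ _) (ENNReal.ofReal_le_ofReal ?_)
  rw [max_sub_min_eq_abs]
  have hi : |u i| ≤ ‖u‖ := by
    simpa [Real.norm_eq_abs] using norm_le_pi_norm u i
  have hj : |u j| ≤ ‖u‖ := by
    simpa [Real.norm_eq_abs] using norm_le_pi_norm u j
  have : s * (y i + u i) + ε * (y j + u j) - (s * y i + ε * y j) = s * u i + ε * u j := by
    ring
  rw [this]
  calc |s * u i + ε * u j| ≤ |s * u i| + |ε * u j| := abs_add_le _ _
    _ = |u i| + |u j| := by
        rcases hs with rfl | rfl <;> rcases hε with rfl | rfl <;> simp [abs_mul]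
    _ ≤ 2 * ‖u‖ := by linarith

lemma Slb_bound_eq {d : ℕ} (s : ℝ) (hs : s = 1 ∨ s = -1) (i : Fin d) (y u : Fin d → ℝ)
    (ε : ℝ) (hε : ε = 1 ∨ ε = -1) :
    volume (Slb s i y u i ε) ≤ ENNReal.ofReal ‖u‖ := by
  have hset : Slb s i y u i ε = {z : Fin d → ℝ | z ∈ Set.Icc 0 1 ∧ (s + ε) * z i ∈
      Set.Ico (min ((s + ε) * y i) ((s + ε) * (y i + u i)))
              (max ((s + ε) * y i) ((s + ε) * (y i + u i)))} := by
    unfold Slb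
    have e1 : ∀ t : ℝ, s * t + ε * t = (s + ε) * t := fun t => by ring
    have e2 : s * (y i + u i) + ε * (y i + u i) = (s + ε) * (y i + u i) := by ring
    ext z
    simp only [Set.mem_setOf_eq, e1, e2]
  rcases eq_or_ne (s + ε) 0 with h0 | hne
  · have : Slb s i y u i ε = ∅ := by
      rw [hset, h0]
      simp
    rw [this]
    simp
  · have hc : s + ε = 2 ∨ s + ε = -2 := by
      rcases hs with rfl | rfl <;> rcases hε with rfl | rfl <;> simp_all <;> norm_num
    rw [hset]
    refine le_trans (slab_eq' i (s + ε) hc _ _) (ENNReal.ofReal_le_ofReal ?_)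
    rw [max_sub_min_eq_abs]
    have e3 : (s + ε) * (y i + u i) - (s + ε) * y i = (s + ε) * u i := by ring
    rw [e3, abs_mul]
    have hi : |u i| ≤ ‖u‖ := by simpa [Real.norm_eq_abs] using norm_le_pi_norm u i
    have e4 : |s + ε| = 2 := by rcases hc with h | h <;> rw [h] <;> norm_num
    rw [e4]
    linarith

end Aux

/-- The `s`-pyramid in direction `i` around `y` (ℓ∞-norm). -/
def Pyr {d : ℕ} (s : ℝ) (i : Fin d) (y : Fin d → ℝ) : Set (Fin d → ℝ) :=
  {z | s * (z i - y i) = ‖z - y‖}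

theorem precision_lemma {d : ℕ} (X : Set (Fin d → ℝ))
    (hXmeas : MeasurableSet X) (hXsub : X ⊆ Set.Icc 0 1)
    (s : ℝ) (hs : s = 1 ∨ s = -1) (i : Fin d) (y u : Fin d → ℝ) :
    |(volume (X ∩ Pyr s i y)).toReal - (volume (X ∩ Pyr s i (y + u))).toReal| ≤
      Real.sqrt (8 * d ^ 3) * ‖u‖ := by
  classical
  have hd1 : 1 ≤ d := i.pos
  -- membership description of pyramids
  have hmem : ∀ w z : Fin d → ℝ, z ∈ Pyr s i w ↔ ∀ j,
      (s * w i + 1 * w j ≤ s * z i + 1 * z j ∧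
        s * w i + (-1) * w j ≤ s * z i + (-1) * z j) := by
    intro w z
    have : z ∈ Pyr s i w ↔ s * (z i - w i) = ‖z - w‖ := Iff.rfl
    rw [this, mem_Pyr_iff' s hs i w z]
    refine forall_congr' fun j => ?_
    rw [abs_le]
    constructor <;> rintro ⟨h1, h2⟩ <;> constructor <;> nlinarith [h1, h2]
  set P : Set (Fin d → ℝ) := Pyr s i y with hP
  set P' : Set (Fin d → ℝ) := Pyr s i (y + u) with hP'
  set D : Set (Fin d → ℝ) := ⋃ j, (Slb s i y u j 1 ∪ Slb s i y u j (-1)) with hD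
  -- covering of the symmetric difference
  have key : ((X ∩ P) \ P') ∪ ((X ∩ P') \ P) ⊆ D := by
    rintro z (⟨⟨hzX, hzP⟩, hzP'⟩ | ⟨⟨hzX, hzP'⟩, hzP⟩)
    · rw [hmem] at hzP
      rw [hmem] at hzP'
      push_neg at hzP'
      obtain ⟨j, hj⟩ := hzP'
      have hzc : z ∈ Set.Icc (0 : Fin d → ℝ) 1 := hXsub hzX
      simp only [Pi.add_apply] at hj
      rcases Classical.em (s * (y i + u i) + 1 * (y j + u j) ≤ s * z i + 1 * z j) with h1 | h1
      · have h2 : s * z i + (-1) * z j < s * (y i + u i) + (-1) * (y j + u j) := hj h1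
        refine Set.mem_iUnion.mpr ⟨j, Or.inr ⟨hzc, ?_, ?_⟩⟩
        · exact le_trans (min_le_left _ _) (hzP j).2
        · exact lt_of_lt_of_le h2 (le_max_right _ _)
      · have h1' : s * z i + 1 * z j < s * (y i + u i) + 1 * (y j + u j) := not_le.mp h1
        refine Set.mem_iUnion.mpr ⟨j, Or.inl ⟨hzc, ?_, ?_⟩⟩
        · exact le_trans (min_le_left _ _) (hzP j).1
        · exact lt_of_lt_of_le h1' (le_max_right _ _)
    · rw [hmem] at hzP
      rw [hmem] at hzP'
      push_neg at hzP
      obtain ⟨j, hj⟩ := hzP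
      have hzc : z ∈ Set.Icc (0 : Fin d → ℝ) 1 := hXsub hzX
      simp only [Pi.add_apply] at hzP'
      rcases Classical.em (s * y i + 1 * y j ≤ s * z i + 1 * z j) with h1 | h1
      · have h2 : s * z i + (-1) * z j < s * y i + (-1) * y j := hj h1
        refine Set.mem_iUnion.mpr ⟨j, Or.inr ⟨hzc, ?_, ?_⟩⟩
        · exact le_trans (min_le_right _ _) (hzP' j).2
        · exact lt_of_lt_of_le h2 (le_max_left _ _)
      · have h1' : s * z i + 1 * z j < s * y i + 1 * y j := not_le.mp h1
        refine Set.mem_iUnion.mpr ⟨j, Or.inl ⟨hzc, ?_, ?_⟩⟩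
        · exact le_trans (min_le_right _ _) (hzP' j).1
        · exact lt_of_lt_of_le h1' (le_max_left _ _)
  -- volume of D
  have hVolD : volume D ≤ ENNReal.ofReal ((4 * d - 2) * ‖u‖) := by
    have h1 : volume D ≤ ∑ j : Fin d, volume (Slb s i y u j 1 ∪ Slb s i y u j (-1)) :=
      measure_iUnion_fintype_le _ _
    have h2 : ∀ j : Fin d, volume (Slb s i y u j 1 ∪ Slb s i y u j (-1)) ≤
        if j = i then ENNReal.ofReal (2 * ‖u‖) else ENNReal.ofReal (4 * ‖u‖) := by
      intro j
      refine le_trans (measure_union_le _ _) ?_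
      rcases eq_or_ne j i with rfl | hj
      · rw [if_pos rfl]
        have b1 := Slb_bound_eq s hs j y u 1 (Or.inl rfl)
        have b2 := Slb_bound_eq s hs j y u (-1) (Or.inr rfl)
        refine le_trans (add_le_add b1 b2) (le_of_eq ?_)
        rw [← ENNReal.ofReal_add (norm_nonneg u) (norm_nonneg u)]; ring_nf
      · rw [if_neg hj]
        have b1 := Slb_bound_ne s hs i y u j hj 1 (Or.inl rfl)
        have b2 := Slb_bound_ne s hs i y u j hj (-1) (Or.inr rfl)
        calc volume (Slb s i y u j 1) + volume (Slb s i y u j (-1))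
            ≤ ENNReal.ofReal (2 * ‖u‖) + ENNReal.ofReal (2 * ‖u‖) := add_le_add b1 b2
          _ = ENNReal.ofReal (4 * ‖u‖) := by
              rw [← ENNReal.ofReal_add (by positivity) (by positivity)]; ring_nf
    refine le_trans h1 (le_trans (Finset.sum_le_sum fun j _ => h2 j) ?_)
    rw [← Finset.add_sum_erase _ _ (Finset.mem_univ i), if_pos rfl]
    have h3 : ∑ j ∈ Finset.univ.erase i,
        (if j = i then ENNReal.ofReal (2 * ‖u‖) else ENNReal.ofReal (4 * ‖u‖))
        = ((d - 1 : ℕ) : ℝ≥0∞) * ENNReal.ofReal (4 * ‖u‖) := by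
      rw [Finset.sum_congr rfl fun j hj => if_neg (Finset.mem_erase.mp hj).1]
      rw [Finset.sum_const, Finset.card_erase_of_mem (Finset.mem_univ i), nsmul_eq_mul]
      simp [Fintype.card_fin]
    rw [h3]
    rw [← ENNReal.ofReal_natCast (d - 1), ← ENNReal.ofReal_mul (by positivity),
      ← ENNReal.ofReal_add (by positivity) (by positivity)]
    refine ENNReal.ofReal_le_ofReal ?_
    have hcast : ((d - 1 : ℕ) : ℝ) = (d : ℝ) - 1 := by
      push_cast [Nat.cast_sub hd1]; ring
    rw [hcast]
    nlinarith [norm_nonneg u]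
  -- finiteness
  have hcube : volume (Set.Icc (0 : Fin d → ℝ) 1) = 1 := by
    rw [Real.volume_Icc_pi]; simp
  have hA_ne : volume (X ∩ P) ≠ ⊤ := by
    refine ne_top_of_le_ne_top ?_ (measure_mono (fun z hz => hXsub hz.1))
    rw [hcube]; exact ENNReal.one_ne_top
  have hB_ne : volume (X ∩ P') ≠ ⊤ := by
    refine ne_top_of_le_ne_top ?_ (measure_mono (fun z hz => hXsub hz.1))
    rw [hcube]; exact ENNReal.one_ne_top
  set K : ℝ := (4 * d - 2) * ‖u‖ with hK
  have hd1' : (1 : ℝ) ≤ (d : ℝ) := by exact_mod_cast hd1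
  have hK0 : 0 ≤ K := by
    apply mul_nonneg _ (norm_nonneg u); linarith
  have hAB : volume (X ∩ P) ≤ volume (X ∩ P') + ENNReal.ofReal K := by
    have hsub : X ∩ P ⊆ (X ∩ P') ∪ D := by
      intro z hz
      by_cases h : z ∈ P'
      · exact Or.inl ⟨hz.1, h⟩
      · exact Or.inr (key (Or.inl ⟨hz, h⟩))
    calc volume (X ∩ P) ≤ volume ((X ∩ P') ∪ D) := measure_mono hsub
      _ ≤ volume (X ∩ P') + volume D := measure_union_le _ _
      _ ≤ volume (X ∩ P') + ENNReal.ofReal K := add_le_add le_rfl hVolD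
  have hBA : volume (X ∩ P') ≤ volume (X ∩ P) + ENNReal.ofReal K := by
    have hsub : X ∩ P' ⊆ (X ∩ P) ∪ D := by
      intro z hz
      by_cases h : z ∈ P
      · exact Or.inl ⟨hz.1, h⟩
      · exact Or.inr (key (Or.inr ⟨hz, h⟩))
    calc volume (X ∩ P') ≤ volume ((X ∩ P) ∪ D) := measure_mono hsub
      _ ≤ volume (X ∩ P) + volume D := measure_union_le _ _
      _ ≤ volume (X ∩ P) + ENNReal.ofReal K := add_le_add le_rfl hVolD
  have t1 : (volume (X ∩ P)).toReal ≤ (volume (X ∩ P')).toReal + K := by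
    have h := ENNReal.toReal_mono (by
      exact ENNReal.add_ne_top.mpr ⟨hB_ne, ENNReal.ofReal_ne_top⟩) hAB
    rwa [ENNReal.toReal_add hB_ne ENNReal.ofReal_ne_top, ENNReal.toReal_ofReal hK0] at h
  have t2 : (volume (X ∩ P')).toReal ≤ (volume (X ∩ P)).toReal + K := by
    have h := ENNReal.toReal_mono (by
      exact ENNReal.add_ne_top.mpr ⟨hA_ne, ENNReal.ofReal_ne_top⟩) hBA
    rwa [ENNReal.toReal_add hA_ne ENNReal.ofReal_ne_top, ENNReal.toReal_ofReal hK0] at h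
  have hKle : K ≤ Real.sqrt (8 * d ^ 3) * ‖u‖ := by
    refine mul_le_mul_of_nonneg_right ?_ (norm_nonneg u)
    have h8 : (0:ℝ) < 4 * (d:ℝ) - 2 := by linarith
    exact (Real.le_sqrt' h8).mpr (by
      nlinarith [mul_nonneg (by linarith : (0:ℝ) ≤ 8 * (d:ℝ)) (sq_nonneg ((d:ℝ) - 1))])
  rw [abs_sub_le_iff]
  constructor <;> [skip; skip] <;> linarith [t1, t2, hKle]
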